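/- Let H and Y be real Hilbert spaces, F : H → Y a differentiable map with ‖fderiv F(z)‖ ≤ L₁ (operator norm) for all z ∈ H, and ℓ : Y → H → ℝ a function such that (y, z) ↦ ℓ(y)(z) is differentiable and the gradient of y ↦ ℓ(y)(z) has norm at most L₂ for all (y, z). Then for every z ∈ H, the gradient of the composite z' ↦ ℓ(F(z'))(z') at z and the partial gradient of z' ↦ ℓ(F(z))(z') at z differ in norm by at most L₁·L₂: ‖∇(z' ↦ ℓ(F z')(z'))(z) − ∇(z' ↦ ℓ(F z)(z'))(z)‖ ≤ L₁·L₂. (Gradient estimation error of AdaRC: ignoring the back-propagation path through the base TTA prediction incurs a gradient error of at most L₁L₂.) -/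

import Mathlib

/-- **Gradient estimation error of AdaRC.**
If the base TTA map `F : H → Y` has derivative of operator norm at most `L₁` everywhere, and
the loss `ℓ(y, z)` is differentiable jointly with the gradient of `y ↦ ℓ(y, z)` bounded in
norm by `L₂`, then ignoring the back-propagation path through `F` incurs a gradient error of
at most `L₁·L₂`. -/
theorem adarc_gradient_estimation_error
    {H Y : Type*} [NormedAddCommGroup H] [InnerProductSpace ℝ H] [CompleteSpace H]
    [NormedAddCommGroup Y] [InnerProductSpace ℝ Y] [CompleteSpace Y]
    (F : H → Y) (hFd : Differentiable ℝ F)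
    (L₁ : ℝ) (hL₁ : ∀ z : H, ‖fderiv ℝ F z‖ ≤ L₁)
    (ℓ : Y → H → ℝ) (hℓd : Differentiable ℝ (fun p : Y × H => ℓ p.1 p.2))
    (L₂ : ℝ) (hL₂ : ∀ (y : Y) (z : H), ‖gradient (fun y' => ℓ y' z) y‖ ≤ L₂) :
    ∀ z : H,
      ‖gradient (fun z' => ℓ (F z') z') z - gradient (fun z' => ℓ (F z) z') z‖ ≤ L₁ * L₂ := by
  intro z
  set D := fderiv ℝ (fun p : Y × H => ℓ p.1 p.2) (F z, z) with hDdef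
  have hD : HasFDerivAt (fun p : Y × H => ℓ p.1 p.2) D (F z, z) :=
    (hℓd (F z, z)).hasFDerivAt
  have hF : HasFDerivAt F (fderiv ℝ F z) z := (hFd z).hasFDerivAt
  have hg : HasFDerivAt (fun z' => ℓ (F z') z')
      (D.comp ((fderiv ℝ F z).prod (ContinuousLinearMap.id ℝ H))) z := by
    have h2 := HasFDerivAt.comp (𝕜 := ℝ) (f := fun x => (F x, x)) z hD (HasFDerivAt.prodMk hF (hasFDerivAt_id z))
    exact h2
  have hh : HasFDerivAt (fun z' => ℓ (F z) z')
      (D.comp (ContinuousLinearMap.inr ℝ Y H)) z := by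
    have h2 := HasFDerivAt.comp (𝕜 := ℝ) (f := fun x : H => (F z, x)) z hD
      (HasFDerivAt.prodMk (hasFDerivAt_const (F z) z) (hasFDerivAt_id z))
    have he : ((0 : H →L[ℝ] Y).prod (ContinuousLinearMap.id ℝ H))
        = ContinuousLinearMap.inr ℝ Y H := by ext x <;> simp
    rw [he] at h2
    exact h2
  have hy : HasFDerivAt (fun y => ℓ y z) (D.comp (ContinuousLinearMap.inl ℝ Y H)) (F z) := by
    have h2 := HasFDerivAt.comp (𝕜 := ℝ) (f := fun y : Y => (y, z)) (F z) hD
      (HasFDerivAt.prodMk (hasFDerivAt_id (F z)) (hasFDerivAt_const z (F z)))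
    have he : ((ContinuousLinearMap.id ℝ Y).prod (0 : Y →L[ℝ] H))
        = ContinuousLinearMap.inl ℝ Y H := by ext x <;> simp
    rw [he] at h2
    exact h2
  -- norms of gradients equal norms of fderivs
  have key : gradient (fun z' => ℓ (F z') z') z - gradient (fun z' => ℓ (F z) z') z
      = (InnerProductSpace.toDual ℝ H).symm
          (fderiv ℝ (fun z' => ℓ (F z') z') z - fderiv ℝ (fun z' => ℓ (F z) z') z) := by
    simp [gradient, map_sub]
  rw [key, LinearIsometryEquiv.norm_map, hg.fderiv, hh.fderiv]
  have hdiff : D.comp ((fderiv ℝ F z).prod (ContinuousLinearMap.id ℝ H))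
      - D.comp (ContinuousLinearMap.inr ℝ Y H)
      = (D.comp (ContinuousLinearMap.inl ℝ Y H)).comp (fderiv ℝ F z) := by
    ext x
    simp only [ContinuousLinearMap.sub_apply, ContinuousLinearMap.comp_apply,
      ContinuousLinearMap.prod_apply, ContinuousLinearMap.id_apply,
      ContinuousLinearMap.inr_apply, ContinuousLinearMap.inl_apply, ← map_sub,
      Prod.mk_sub_mk, sub_zero, sub_self]
  rw [hdiff]
  have hL₂' : ‖D.comp (ContinuousLinearMap.inl ℝ Y H)‖ ≤ L₂ := by
    have := hL₂ (F z) z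
    rwa [gradient, hy.fderiv, LinearIsometryEquiv.norm_map] at this
  calc ‖(D.comp (ContinuousLinearMap.inl ℝ Y H)).comp (fderiv ℝ F z)‖
      ≤ ‖D.comp (ContinuousLinearMap.inl ℝ Y H)‖ * ‖fderiv ℝ F z‖ :=
        ContinuousLinearMap.opNorm_comp_le _ _
    _ ≤ L₂ * L₁ := mul_le_mul hL₂' (hL₁ z) (norm_nonneg _)
        (le_trans (norm_nonneg _) hL₂')
    _ = L₁ * L₂ := mul_comm _ _
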